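/- Let M be the m×n Hankel matrix over K of characteristic ≠2, with m=2 and n≥4. Then the maximal ideal (x_1,…,x_{n+1}) is an associated prime of P_2(M): for any 2≤i<j with i≤n-2, 4≤j≤n and i<j, the element α=x_i x_j satisfies α∉P_2(M) and (x_1,…,x_{n+1})·α⊆P_2(M). -/

import Mathlib

open MvPolynomial

/-- The variable `x_i` (1-based) in `K[x_1, …, x_N]`. -/
noncomputable def xv (K : Type*) [CommRing K] (N : ℕ) (i : ℕ) : MvPolynomial (Fin N) K :=
  if h : 1 ≤ i ∧ i ≤ N then X (⟨i - 1, by omega⟩ : Fin N) else 0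

/-- The ideal generated by the 2×2 subpermanents of the m×n Hankel matrix
`M_{ij} = x_{i+j-1}` in `K[x_1, …, x_{m+n-1}]`. -/
noncomputable def P2 (K : Type*) [CommRing K] (m n : ℕ) :
    Ideal (MvPolynomial (Fin (m + n - 1)) K) :=
  Ideal.span { p : MvPolynomial (Fin (m + n - 1)) K | ∃ a b c d : ℕ,
    1 ≤ a ∧ a < b ∧ b ≤ m ∧ 1 ≤ c ∧ c < d ∧ d ≤ n ∧
    p = xv K (m + n - 1) (a + c - 1) * xv K (m + n - 1) (b + d - 1)
      + xv K (m + n - 1) (a + d - 1) * xv K (m + n - 1) (b + c - 1) }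

namespace Stmt17Aux

variable {K : Type*} [Field K] {n : ℕ}

local notation "V" => xv K (2 + n - 1)




lemma xv_eq (k : ℕ) (h1 : 1 ≤ k) (h2 : k ≤ n + 1) :
    V k = X (⟨k - 1, by omega⟩ : Fin (2 + n - 1)) := by
  rw [xv, dif_pos (show 1 ≤ k ∧ k ≤ 2 + n - 1 from ⟨h1, by omega⟩)]

lemma gen_mem (c d : ℕ) (h1 : 1 ≤ c) (h2 : c < d) (h3 : d ≤ n) :
    V c * V (d + 1) + V d * V (c + 1) ∈ P2 K 2 n := by
  apply Ideal.subset_span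
  refine ⟨1, 2, c, d, le_refl 1, one_lt_two, le_refl 2, h1, h2, h3, ?_⟩
  rw [show 1 + c - 1 = c by omega, show 2 + d - 1 = d + 1 by omega,
    show 1 + d - 1 = d by omega, show 2 + c - 1 = c + 1 by omega]

lemma half_mem (hK : ringChar K ≠ 2) {m : MvPolynomial (Fin (2 + n - 1)) K}
    (h : m + m ∈ P2 K 2 n) : m ∈ P2 K 2 n := by
  have h2 : (2 : K) ≠ 0 := Ring.two_ne_zero hK
  have e : (C ((2 : K)⁻¹) : MvPolynomial (Fin (2 + n - 1)) K) * (m + m) = m := by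
    rw [mul_add, ← add_mul, ← C_add,
      show (2 : K)⁻¹ + (2 : K)⁻¹ = 1 by rw [← two_mul, mul_inv_cancel₀ h2], C_1, one_mul]
  exact e ▸ Ideal.mul_mem_left _ _ h



lemma T1 (hK : ringChar K ≠ 2) (a b c : ℕ) (h1 : 1 ≤ a) (h2 : a < b) (h3 : b + 1 ≤ c)
    (h4 : c ≤ n) : V a * V b * V (c + 1) ∈ P2 K 2 n := by
  apply half_mem hK
  have g1 := Ideal.mul_mem_left _ (V a) (gen_mem b c (by omega) (by omega) h4)
  have g2 := Ideal.mul_mem_left _ (V c) (gen_mem a b h1 h2 (by omega))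
  have g3 := Ideal.mul_mem_left _ (V b) (gen_mem a c h1 (by omega) h4)
  have e : V a * V b * V (c + 1) + V a * V b * V (c + 1)
      = V a * (V b * V (c + 1) + V c * V (b + 1))
      - V c * (V a * V (b + 1) + V b * V (a + 1))
      + V b * (V a * V (c + 1) + V c * V (a + 1)) := by ring
  rw [e]; exact add_mem (sub_mem g1 g2) g3

lemma T2 (hK : ringChar K ≠ 2) (a c : ℕ) (h1 : 1 ≤ a) (h2 : a + 2 ≤ c) (h3 : c ≤ n) :
    V (a + 1) * V (a + 1) * V (c + 1) ∈ P2 K 2 n := by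
  apply half_mem hK
  have g1 := Ideal.mul_mem_left _ (V (a + 1)) (gen_mem (a + 1) c (by omega) (by omega) h3)
  have g2 := Ideal.mul_mem_left _ (V (a + 2)) (gen_mem a c h1 (by omega) h3)
  have g3 := Ideal.mul_mem_left _ (V (c + 1)) (gen_mem a (a + 1) h1 (by omega) (by omega))
  have e : V (a + 1) * V (a + 1) * V (c + 1) + V (a + 1) * V (a + 1) * V (c + 1)
      = V (a + 1) * (V (a + 1) * V (c + 1) + V c * V (a + 1 + 1))
      - V (a + 2) * (V a * V (c + 1) + V c * V (a + 1))
      + V (c + 1) * (V a * V (a + 1 + 1) + V (a + 1) * V (a + 1)) := by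
    rw [show a + 1 + 1 = a + 2 by ring]; ring
  rw [e]; exact add_mem (sub_mem g1 g2) g3

lemma T3 (hK : ringChar K ≠ 2) (a c : ℕ) (h1 : 1 ≤ a) (h2 : a + 1 ≤ c) (h3 : c + 1 ≤ n) :
    V a * V (c + 1) * V (c + 1) ∈ P2 K 2 n := by
  apply half_mem hK
  have g1 := Ideal.mul_mem_left _ (V (c + 1)) (gen_mem a c h1 (by omega) (by omega))
  have g2 := Ideal.mul_mem_left _ (V a) (gen_mem c (c + 1) (by omega) (by omega) h3)
  have g3 := Ideal.mul_mem_left _ (V c) (gen_mem a (c + 1) h1 (by omega) h3)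
  have e : V a * V (c + 1) * V (c + 1) + V a * V (c + 1) * V (c + 1)
      = V (c + 1) * (V a * V (c + 1) + V c * V (a + 1))
      + V a * (V c * V (c + 1 + 1) + V (c + 1) * V (c + 1))
      - V c * (V a * V (c + 1 + 1) + V (c + 1) * V (a + 1)) := by ring
  rw [e]; exact sub_mem (add_mem g1 g2) g3

lemma T4 (hK : ringChar K ≠ 2) (a b : ℕ) (h1 : 1 ≤ a) (h2 : a + 1 ≤ b) (h3 : b + 1 ≤ n) :
    V a * V (b + 1) * V (b + 2) ∈ P2 K 2 n := by
  apply half_mem hK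
  have g1 := Ideal.mul_mem_left _ (V (b + 2)) (gen_mem a b h1 (by omega) (by omega))
  have g2 := Ideal.mul_mem_left _ (V (b + 1)) (gen_mem a (b + 1) h1 (by omega) h3)
  have g3 := Ideal.mul_mem_left _ (V (a + 1)) (gen_mem b (b + 1) (by omega) (by omega) h3)
  have e : V a * V (b + 1) * V (b + 2) + V a * V (b + 1) * V (b + 2)
      = V (b + 2) * (V a * V (b + 1) + V b * V (a + 1))
      + V (b + 1) * (V a * V (b + 1 + 1) + V (b + 1) * V (a + 1))
      - V (a + 1) * (V b * V (b + 1 + 1) + V (b + 1) * V (b + 1)) := by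
    rw [show b + 1 + 1 = b + 2 by ring]; ring
  rw [e]; exact sub_mem (add_mem g1 g2) g3

lemma T5 (hK : ringChar K ≠ 2) (a : ℕ) (h1 : 1 ≤ a) (h2 : a + 3 ≤ n) :
    V (a + 1) * V (a + 2) * V (a + 3) ∈ P2 K 2 n := by
  apply half_mem hK
  have g1 := Ideal.mul_mem_left _ (V (a + 1)) (gen_mem (a + 1) (a + 3) (by omega) (by omega) h2)
  have g2 := Ideal.mul_mem_left _ (V (a + 4)) (gen_mem a (a + 1) h1 (by omega) (by omega))
  have g3 := Ideal.mul_mem_left _ (V (a + 2)) (gen_mem a (a + 3) h1 (by omega) h2)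
  have e : V (a + 1) * V (a + 2) * V (a + 3) + V (a + 1) * V (a + 2) * V (a + 3)
      = V (a + 1) * (V (a + 1) * V (a + 3 + 1) + V (a + 3) * V (a + 1 + 1))
      - V (a + 4) * (V a * V (a + 1 + 1) + V (a + 1) * V (a + 1))
      + V (a + 2) * (V a * V (a + 3 + 1) + V (a + 3) * V (a + 1)) := by
    rw [show a + 1 + 1 = a + 2 by ring, show a + 3 + 1 = a + 4 by ring]; ring
  rw [e]; exact add_mem (sub_mem g1 g2) g3

lemma T6 (hK : ringChar K ≠ 2) (a : ℕ) (h1 : 1 ≤ a) (h2 : a + 2 ≤ n) :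
    V (a + 1) * V (a + 1) * V (a + 2) ∈ P2 K 2 n := by
  apply half_mem hK
  have g1 := Ideal.mul_mem_left _ (V (a + 2)) (gen_mem a (a + 1) h1 (by omega) (by omega))
  have g2 := Ideal.mul_mem_left _ (V (a + 1)) (gen_mem a (a + 2) h1 (by omega) h2)
  have g3 := Ideal.mul_mem_left _ (V a) (gen_mem (a + 1) (a + 2) (by omega) (by omega) h2)
  have e : V (a + 1) * V (a + 1) * V (a + 2) + V (a + 1) * V (a + 1) * V (a + 2)
      = V (a + 2) * (V a * V (a + 1 + 1) + V (a + 1) * V (a + 1))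
      + V (a + 1) * (V a * V (a + 2 + 1) + V (a + 2) * V (a + 1))
      - V a * (V (a + 1) * V (a + 2 + 1) + V (a + 2) * V (a + 1 + 1)) := by
    rw [show a + 1 + 1 = a + 2 by ring]; ring
  rw [e]; exact sub_mem (add_mem g1 g2) g3

lemma T7 (hK : ringChar K ≠ 2) (a : ℕ) (h1 : 1 ≤ a) (h2 : a + 2 ≤ n) :
    V (a + 1) * V (a + 2) * V (a + 2) ∈ P2 K 2 n := by
  apply half_mem hK
  have g1 := Ideal.mul_mem_left _ (V (a + 1)) (gen_mem (a + 1) (a + 2) (by omega) (by omega) h2)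
  have g2 := Ideal.mul_mem_left _ (V (a + 2)) (gen_mem a (a + 2) h1 (by omega) h2)
  have g3 := Ideal.mul_mem_left _ (V (a + 3)) (gen_mem a (a + 1) h1 (by omega) (by omega))
  have e : V (a + 1) * V (a + 2) * V (a + 2) + V (a + 1) * V (a + 2) * V (a + 2)
      = V (a + 1) * (V (a + 1) * V (a + 2 + 1) + V (a + 2) * V (a + 1 + 1))
      + V (a + 2) * (V a * V (a + 2 + 1) + V (a + 2) * V (a + 1))
      - V (a + 3) * (V a * V (a + 1 + 1) + V (a + 1) * V (a + 1)) := by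
    rw [show a + 1 + 1 = a + 2 by ring, show a + 2 + 1 = a + 3 by ring]; ring
  rw [e]; exact sub_mem (add_mem g1 g2) g3



lemma part2 (hK : ringChar K ≠ 2) (hn : 4 ≤ n) (i j : ℕ) (hi : 2 ≤ i) (hi' : i ≤ n - 2)
    (hj : 4 ≤ j) (hj' : j ≤ n) (hij : i < j) (k : ℕ) (hk1 : 1 ≤ k) (hk2 : k ≤ n + 1) :
    V k * (V i * V j) ∈ P2 K 2 n := by
  have conv3 : ∀ a b c : ℕ, V a * V b * V c ∈ P2 K 2 n → V b * (V a * V c) ∈ P2 K 2 n := by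
    intro a b c h
    rwa [show V b * (V a * V c) = V a * V b * V c by ring]
  rcases lt_trichotomy k i with hki | heq | hik
  · -- k < i
    rcases Nat.lt_or_ge (i + 1) j with h | h
    · -- j ≥ i + 2
      have t := T1 (K := K) (n := n) hK k i (j - 1) hk1 hki (by omega) (by omega)
      rw [show j - 1 + 1 = j by omega] at t
      rwa [show V k * (V i * V j) = V k * V i * V j by ring]
    · -- j = i + 1
      have hji : j = i + 1 := by omega
      rcases Nat.lt_or_ge (k + 1) i with h2 | h2
      · -- k ≤ i - 2
        have t := T4 (K := K) (n := n) hK k (i - 1) hk1 (by omega) (by omega)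
        rw [show i - 1 + 1 = i by omega, show i - 1 + 2 = j by omega] at t
        rwa [show V k * (V i * V j) = V k * V i * V j by ring]
      · -- k = i - 1
        have hk : k = i - 1 := by omega
        have hi3 : 3 ≤ i := by omega
        have t := T5 (K := K) (n := n) hK (i - 2) (by omega) (by omega)
        rw [show i - 2 + 1 = k by omega, show i - 2 + 2 = i by omega,
          show i - 2 + 3 = j by omega] at t
        rwa [show V k * (V i * V j) = V k * V i * V j by ring]
  · rw [heq]
    rcases Nat.lt_or_ge (i + 1) j with h | h
    · have t := T2 (K := K) (n := n) hK (i - 1) (j - 1) (by omega) (by omega) (by omega)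
      rw [show i - 1 + 1 = i by omega, show j - 1 + 1 = j by omega] at t
      rwa [show V i * (V i * V j) = V i * V i * V j by ring]
    · have hji : j = i + 1 := by omega
      have t := T6 (K := K) (n := n) hK (i - 1) (by omega) (by omega)
      rw [show i - 1 + 1 = i by omega, show i - 1 + 2 = j by omega] at t
      rwa [show V i * (V i * V j) = V i * V i * V j by ring]
  · -- i < k
    rcases lt_trichotomy k j with hkj | heq2 | hjk
    · -- i < k < j
      rcases Nat.lt_or_ge (k + 1) j with h | h
      · have t := T1 (K := K) (n := n) hK i k (j - 1) (by omega) hik (by omega) (by omega)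
        rw [show j - 1 + 1 = j by omega] at t
        exact conv3 i k j t
      · -- k = j - 1
        have hk : k = j - 1 := by omega
        rcases Nat.lt_or_ge (i + 2) j with h2 | h2
        · have t := T4 (K := K) (n := n) hK i (j - 2) (by omega) (by omega) (by omega)
          rw [show j - 2 + 1 = k by omega, show j - 2 + 2 = j by omega] at t
          exact conv3 i k j t
        · -- j = i + 2, k = i + 1
          have t := T5 (K := K) (n := n) hK (i - 1) (by omega) (by omega)
          rw [show i - 1 + 1 = i by omega, show i - 1 + 2 = k by omega,
            show i - 1 + 3 = j by omega] at t
          exact conv3 i k j t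
    · rw [heq2]
      rcases Nat.lt_or_ge (i + 1) j with h | h
      · have t := T3 (K := K) (n := n) hK i (j - 1) (by omega) (by omega) (by omega)
        rw [show j - 1 + 1 = j by omega] at t
        rwa [show V j * (V i * V j) = V i * V j * V j by ring]
      · have hji : j = i + 1 := by omega
        have t := T7 (K := K) (n := n) hK (i - 1) (by omega) (by omega)
        rw [show i - 1 + 1 = i by omega, show i - 1 + 2 = j by omega] at t
        rwa [show V j * (V i * V j) = V i * V j * V j by ring]
    · -- k > j
      rcases Nat.lt_or_ge (j + 1) k with h | h
      · have t := T1 (K := K) (n := n) hK i j (k - 1) (by omega) hij (by omega) (by omega)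
        rw [show k - 1 + 1 = k by omega] at t
        rwa [show V k * (V i * V j) = V i * V j * V k by ring]
      · -- k = j + 1
        have hk : k = j + 1 := by omega
        rcases Nat.lt_or_ge (i + 1) j with h2 | h2
        · have t := T4 (K := K) (n := n) hK i (j - 1) (by omega) (by omega) (by omega)
          rw [show j - 1 + 1 = j by omega, show j - 1 + 2 = k by omega] at t
          rwa [show V k * (V i * V j) = V i * V j * V k by ring]
        · -- j = i + 1
          have t := T5 (K := K) (n := n) hK (i - 1) (by omega) (by omega)
          rw [show i - 1 + 1 = i by omega, show i - 1 + 2 = j by omega,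
            show i - 1 + 3 = k by omega] at t
          rwa [show V k * (V i * V j) = V i * V j * V k by ring]



/-- index map into `Fin (2+n-1)` -/
def ix (n : ℕ) (v : ℕ) : Fin (2 + n - 1) := ⟨(v - 1) % (2 + n - 1), Nat.mod_lt _ (by omega)⟩

lemma xv_eq_X (v : ℕ) (h1 : 1 ≤ v) (h2 : v ≤ n + 1) : V v = X (ix n v) := by
  rw [xv_eq v h1 h2]
  congr 1
  exact Fin.ext (Nat.mod_eq_of_lt (by omega)).symm

lemma ix_inj {v w : ℕ} (hv1 : 1 ≤ v) (hv2 : v ≤ n + 1) (hw1 : 1 ≤ w) (hw2 : w ≤ n + 1)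
    (h : ix n v = ix n w) : v = w := by
  have := Fin.val_eq_of_eq h
  simp only [ix] at this
  rw [Nat.mod_eq_of_lt (by omega), Nat.mod_eq_of_lt (by omega)] at this
  omega

/-- degree-2 exponent `x_u x_{i+j-u}` -/
noncomputable def me (n i j : ℕ) (u : ℕ) : Fin (2 + n - 1) →₀ ℕ :=
  Finsupp.single (ix n u) 1 + Finsupp.single (ix n (i + j - u)) 1

def Tset (n i j : ℕ) : Finset ℕ := Finset.Icc (max 1 (i + j - (n + 1))) ((i + j) / 2)

noncomputable def L (K : Type*) [Field K] (n i j : ℕ)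
    (p : MvPolynomial (Fin (2 + n - 1)) K) : K :=
  ∑ u ∈ Tset n i j, (-1 : K) ^ u * coeff (me n i j u) p

lemma L_add (i j : ℕ) (p q : MvPolynomial (Fin (2 + n - 1)) K) :
    L K n i j (p + q) = L K n i j p + L K n i j q := by
  simp [L, coeff_add, mul_add, Finset.sum_add_distrib]

lemma L_zero (i j : ℕ) : L K n i j 0 = 0 := by simp [L]

lemma Xm {N : ℕ} (a b : Fin N) :
    (X a : MvPolynomial (Fin N) K) * X b
      = monomial (Finsupp.single a 1 + Finsupp.single b 1) 1 := by
  rw [← pow_one (X a), ← pow_one (X b), X_pow_eq_monomial, X_pow_eq_monomial,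
    monomial_mul, one_mul]

lemma pair_le {N : ℕ} {a b c d : Fin N}
    (h : Finsupp.single a 1 + Finsupp.single b 1
        ≤ (Finsupp.single c 1 + Finsupp.single d 1 : Fin N →₀ ℕ)) :
    Finsupp.single a 1 + Finsupp.single b 1
      = (Finsupp.single c 1 + Finsupp.single d 1 : Fin N →₀ ℕ) := by
  have hpt : ∀ x, (Finsupp.single a 1 + Finsupp.single b 1 : Fin N →₀ ℕ) x
      ≤ (Finsupp.single c 1 + Finsupp.single d 1 : Fin N →₀ ℕ) x := fun x => h x
  have hs : ∑ x : Fin N, (Finsupp.single a 1 + Finsupp.single b 1 : Fin N →₀ ℕ) x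
      = ∑ x : Fin N, (Finsupp.single c 1 + Finsupp.single d 1 : Fin N →₀ ℕ) x := by
    simp [Finsupp.add_apply, Finsupp.single_apply, Finset.sum_add_distrib]
  ext x
  exact (Finset.sum_eq_sum_iff_of_le (fun x _ => hpt x)).1 hs x (Finset.mem_univ x)

lemma pair_eq_iff {N : ℕ} {a b c d : Fin N} :
    Finsupp.single a 1 + Finsupp.single b 1
        = (Finsupp.single c 1 + Finsupp.single d 1 : Fin N →₀ ℕ)
      ↔ (a = c ∧ b = d) ∨ (a = d ∧ b = c) := by
  rw [Finsupp.single_add_single_eq_single_add_single (one_ne_zero) (one_ne_zero)]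
  simp



lemma tsub_self_finsupp (f : Fin (2 + n - 1) →₀ ℕ) : f - f = 0 := by
  ext x; simp [Finsupp.tsub_apply]

lemma match_iff (i j a b u : ℕ) (ha1 : 1 ≤ a) (ha2 : a ≤ n + 1) (hb1 : 1 ≤ b) (hb2 : b ≤ n + 1)
    (hsum6 : 6 ≤ i + j) (hsumb : i + j ≤ 2 * n - 2) (hu : u ∈ Tset n i j) :
    (Finsupp.single (ix n a) 1 + Finsupp.single (ix n b) 1 ≤ me n i j u)
      ↔ (a = u ∧ b = i + j - u) ∨ (a = i + j - u ∧ b = u) := by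
  simp only [Tset, Finset.mem_Icc] at hu
  obtain ⟨hu1, hu2⟩ := hu
  have hu3 : 1 ≤ u := by omega
  have hu4 : u ≤ n + 1 := by omega
  have hu5 : 1 ≤ i + j - u := by omega
  have hu6 : i + j - u ≤ n + 1 := by omega
  constructor
  · intro h
    rcases pair_eq_iff.mp (pair_le h) with ⟨h1, h2⟩ | ⟨h1, h2⟩
    · exact Or.inl ⟨ix_inj ha1 ha2 hu3 hu4 h1, ix_inj hb1 hb2 hu5 hu6 h2⟩
    · exact Or.inr ⟨ix_inj ha1 ha2 hu5 hu6 h1, ix_inj hb1 hb2 hu3 hu4 h2⟩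
  · rintro (⟨rfl, rfl⟩ | ⟨rfl, rfl⟩)
    · exact le_of_eq rfl
    · exact le_of_eq (add_comm _ _)

lemma L_mul_mono (i j a b : ℕ) (ha1 : 1 ≤ a) (ha2 : a ≤ n + 1) (hb1 : 1 ≤ b) (hb2 : b ≤ n + 1)
    (hsum6 : 6 ≤ i + j) (hsumb : i + j ≤ 2 * n - 2) (r : MvPolynomial (Fin (2 + n - 1)) K) :
    L K n i j (r * monomial (Finsupp.single (ix n a) 1 + Finsupp.single (ix n b) 1) 1)
      = ∑ u ∈ Tset n i j, (-1 : K) ^ u *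
          (if (a = u ∧ b = i + j - u) ∨ (a = i + j - u ∧ b = u) then coeff 0 r else 0) := by
  rw [L]
  apply Finset.sum_congr rfl
  intro u hu
  rw [coeff_mul_monomial']
  congr 1
  by_cases hm : (a = u ∧ b = i + j - u) ∨ (a = i + j - u ∧ b = u)
  · rw [if_pos ((match_iff i j a b u ha1 ha2 hb1 hb2 hsum6 hsumb hu).mpr hm), if_pos hm, mul_one]
    have he : Finsupp.single (ix n a) 1 + Finsupp.single (ix n b) 1 = me n i j u := by
      rcases hm with ⟨rfl, rfl⟩ | ⟨rfl, rfl⟩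
      · rfl
      · exact add_comm _ _
    rw [he, tsub_self_finsupp]
  · rw [if_neg (fun h => hm ((match_iff i j a b u ha1 ha2 hb1 hb2 hsum6 hsumb hu).mp h)),
      if_neg hm]


lemma L_mul_gen (hn : 4 ≤ n) (i j : ℕ) (hi : 2 ≤ i) (hi' : i ≤ n - 2) (hj : 4 ≤ j)
    (hj' : j ≤ n) (hij : i < j) (c d : ℕ) (hc : 1 ≤ c) (hcd : c < d) (hd : d ≤ n)
    (r : MvPolynomial (Fin (2 + n - 1)) K) :
    L K n i j (r * (V c * V (d + 1) + V d * V (c + 1))) = 0 := by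
  have hsum6 : 6 ≤ i + j := by omega
  have hsumb : i + j ≤ 2 * n - 2 := by omega
  rw [xv_eq_X c (by omega) (by omega), xv_eq_X (d + 1) (by omega) (by omega),
    xv_eq_X d (by omega) (by omega), xv_eq_X (c + 1) (by omega) (by omega), Xm, Xm,
    mul_add, L_add,
    L_mul_mono i j c (d + 1) (by omega) (by omega) (by omega) (by omega) hsum6 hsumb r,
    L_mul_mono i j d (c + 1) (by omega) (by omega) (by omega) (by omega) hsum6 hsumb r]
  by_cases hs : c + d + 1 = i + j
  · rw [Finset.sum_eq_single c ?z1 ?z2, Finset.sum_eq_single (c + 1) ?z3 ?z4]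
    · rw [if_pos (by omega), if_pos (by omega)]
      ring
    case z1 =>
      intro u hu hne
      simp only [Tset, Finset.mem_Icc] at hu
      rw [if_neg (by omega), mul_zero]
    case z2 =>
      intro hnc
      exfalso; apply hnc; simp only [Tset, Finset.mem_Icc]; omega
    case z3 =>
      intro u hu hne
      simp only [Tset, Finset.mem_Icc] at hu
      rw [if_neg (by omega), mul_zero]
    case z4 =>
      intro hnc
      exfalso; apply hnc; simp only [Tset, Finset.mem_Icc]; omega
  · rw [Finset.sum_eq_zero ?_, Finset.sum_eq_zero ?_, add_zero]
    · intro u hu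
      simp only [Tset, Finset.mem_Icc] at hu
      rw [if_neg (by omega), mul_zero]
    · intro u hu
      simp only [Tset, Finset.mem_Icc] at hu
      rw [if_neg (by omega), mul_zero]

lemma L_alpha (hn : 4 ≤ n) (i j : ℕ) (hi : 2 ≤ i) (hi' : i ≤ n - 2) (hj : 4 ≤ j)
    (hj' : j ≤ n) (hij : i < j) :
    L K n i j (V i * V j) = (-1 : K) ^ i := by
  have hsum6 : 6 ≤ i + j := by omega
  have hsumb : i + j ≤ 2 * n - 2 := by omega
  rw [xv_eq_X i (by omega) (by omega), xv_eq_X j (by omega) (by omega), Xm, L]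
  rw [Finset.sum_eq_single i ?z1 ?z2]
  · rw [coeff_monomial, if_pos, mul_one]
    show Finsupp.single (ix n i) 1 + Finsupp.single (ix n j) 1 = me n i j i
    rw [me, show i + j - i = j by omega]
  case z1 =>
    intro u hu hne
    simp only [Tset, Finset.mem_Icc] at hu
    rw [coeff_monomial, if_neg, mul_zero]
    intro he
    rcases pair_eq_iff.mp he with ⟨h1, h2⟩ | ⟨h1, h2⟩
    · exact hne (ix_inj (v := i) (w := u) (by omega) (by omega) (by omega) (by omega) h1).symm
    · have := ix_inj (v := j) (w := u) (by omega) (by omega) (by omega) (by omega) h2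
      omega
  case z2 =>
    intro hni
    exfalso; apply hni; simp only [Tset, Finset.mem_Icc]; omega

lemma not_mem (hn : 4 ≤ n) (i j : ℕ) (hi : 2 ≤ i) (hi' : i ≤ n - 2) (hj : 4 ≤ j)
    (hj' : j ≤ n) (hij : i < j) : V i * V j ∉ P2 K 2 n := by
  intro hmem
  have key : ∀ r : MvPolynomial (Fin (2 + n - 1)) K, L K n i j (r * (V i * V j)) = 0 := by
    refine Submodule.span_induction
      (p := fun x _ => ∀ r : MvPolynomial (Fin (2 + n - 1)) K, L K n i j (r * x) = 0)
      ?_ ?_ ?_ ?_ hmem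
    · rintro p ⟨a, b, c, d, ha, hab, hb, hc, hcd, hd, rfl⟩ r
      have ha1 : a = 1 := by omega
      have hb2 : b = 2 := by omega
      subst ha1 hb2
      rw [show 1 + c - 1 = c by omega, show 2 + d - 1 = d + 1 by omega,
        show 1 + d - 1 = d by omega, show 2 + c - 1 = c + 1 by omega]
      exact L_mul_gen hn i j hi hi' hj hj' hij c d hc hcd hd r
    · intro r; rw [mul_zero]; exact L_zero i j
    · intro x y hx hy ihx ihy r; rw [mul_add, L_add, ihx, ihy, add_zero]
    · intro s x hx ih r; rw [smul_eq_mul, ← mul_assoc]; exact ih (r * s)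
  have h1 := key 1
  rw [one_mul, L_alpha hn i j hi hi' hj hj' hij] at h1
  exact pow_ne_zero i (neg_ne_zero.mpr one_ne_zero) h1


lemma X_mem_vars (v : Fin (2 + n - 1)) :
    X v ∈ Ideal.span { p : MvPolynomial (Fin (2 + n - 1)) K |
      ∃ k : ℕ, 1 ≤ k ∧ k ≤ n + 1 ∧ p = V k } := by
  apply Ideal.subset_span
  refine ⟨v.val + 1, by omega, by have := v.isLt; omega, ?_⟩
  rw [xv_eq (v.val + 1) (by omega) (by have := v.isLt; omega)]
  exact congrArg X (Fin.ext (by simp))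

lemma sub_const_mem (p : MvPolynomial (Fin (2 + n - 1)) K) :
    p - C (constantCoeff p) ∈ Ideal.span { q : MvPolynomial (Fin (2 + n - 1)) K |
      ∃ k : ℕ, 1 ≤ k ∧ k ≤ n + 1 ∧ q = V k } := by
  induction p using MvPolynomial.induction_on with
  | C a => simp
  | add p q hp hq =>
    have := add_mem hp hq
    rwa [show p - C (constantCoeff p) + (q - C (constantCoeff q))
      = p + q - C (constantCoeff (p + q)) by rw [map_add, C_add]; ring] at this
  | mul_X p v hp =>
    rw [map_mul, constantCoeff_X, mul_zero, map_zero, sub_zero]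
    exact Ideal.mul_mem_left _ _ (X_mem_vars v)

end Stmt17Aux

/-- For the 2×n Hankel matrix with `n ≥ 4`, the maximal ideal `(x_1, …, x_{n+1})` is
an associated prime of `P_2(M)`: for `α = x_i x_j` with `2 ≤ i ≤ n-2`, `4 ≤ j ≤ n`,
`i < j`, we have `α ∉ P_2(M)`, `(x_1, …, x_{n+1})·α ⊆ P_2(M)`, and
`(P_2(M) : α) = (x_1, …, x_{n+1})`. -/
theorem stmt17 {K : Type*} [Field K] (hK : ringChar K ≠ 2) (n : ℕ) (hn : 4 ≤ n)
    (i j : ℕ) (hi : 2 ≤ i) (hi' : i ≤ n - 2) (hj : 4 ≤ j) (hj' : j ≤ n)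
    (hij : i < j) :
    xv K (2 + n - 1) i * xv K (2 + n - 1) j ∉ P2 K 2 n ∧
    (∀ k : ℕ, 1 ≤ k → k ≤ n + 1 →
      xv K (2 + n - 1) k * (xv K (2 + n - 1) i * xv K (2 + n - 1) j) ∈ P2 K 2 n) ∧
    Submodule.colon (P2 K 2 n)
        (Ideal.span {xv K (2 + n - 1) i * xv K (2 + n - 1) j}) =
      Ideal.span { p : MvPolynomial (Fin (2 + n - 1)) K |
        ∃ k : ℕ, 1 ≤ k ∧ k ≤ n + 1 ∧ p = xv K (2 + n - 1) k } := by
  have hpart1 := Stmt17Aux.not_mem (K := K) hn i j hi hi' hj hj' hij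
  have hpart2 : ∀ k : ℕ, 1 ≤ k → k ≤ n + 1 →
      xv K (2 + n - 1) k * (xv K (2 + n - 1) i * xv K (2 + n - 1) j) ∈ P2 K 2 n :=
    fun k hk1 hk2 => Stmt17Aux.part2 hK hn i j hi hi' hj hj' hij k hk1 hk2
  refine ⟨hpart1, hpart2, ?_⟩
  have mdl_le_colon : Ideal.span { p : MvPolynomial (Fin (2 + n - 1)) K |
        ∃ k : ℕ, 1 ≤ k ∧ k ≤ n + 1 ∧ p = xv K (2 + n - 1) k }
      ≤ Submodule.colon (P2 K 2 n)
        (Ideal.span {xv K (2 + n - 1) i * xv K (2 + n - 1) j}) := by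
    rw [Ideal.span_le]
    rintro p ⟨k, hk1, hk2, rfl⟩
    refine Submodule.mem_colon.mpr ?_
    intro q hq
    obtain ⟨s, rfl⟩ := Ideal.mem_span_singleton'.mp hq
    rw [smul_eq_mul, show xv K (2 + n - 1) k * (s * (xv K (2 + n - 1) i * xv K (2 + n - 1) j))
      = s * (xv K (2 + n - 1) k * (xv K (2 + n - 1) i * xv K (2 + n - 1) j)) by ring]
    exact Ideal.mul_mem_left _ _ (hpart2 k hk1 hk2)
  refine le_antisymm ?_ mdl_le_colon
  intro r hr
  have hra : r * (xv K (2 + n - 1) i * xv K (2 + n - 1) j) ∈ P2 K 2 n := by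
    have := Submodule.mem_colon.mp hr _ (Ideal.mem_span_singleton_self _)
    rwa [smul_eq_mul] at this
  have hr0 := Stmt17Aux.sub_const_mem (K := K) (n := n) r
  have hr0a : (r - C (constantCoeff r)) * (xv K (2 + n - 1) i * xv K (2 + n - 1) j)
      ∈ P2 K 2 n := by
    have := Submodule.mem_colon.mp (mdl_le_colon hr0) _ (Ideal.mem_span_singleton_self _)
    rwa [smul_eq_mul] at this
  have hca : C (constantCoeff r) * (xv K (2 + n - 1) i * xv K (2 + n - 1) j) ∈ P2 K 2 n := by
    have h := sub_mem hra hr0a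
    rwa [show r * (xv K (2 + n - 1) i * xv K (2 + n - 1) j)
        - (r - C (constantCoeff r)) * (xv K (2 + n - 1) i * xv K (2 + n - 1) j)
      = C (constantCoeff r) * (xv K (2 + n - 1) i * xv K (2 + n - 1) j) by ring] at h
  by_cases hc : constantCoeff r = 0
  · have : r = r - C (constantCoeff r) := by rw [hc, map_zero, sub_zero]
    rw [this]; exact hr0
  · exfalso
    apply hpart1
    have : xv K (2 + n - 1) i * xv K (2 + n - 1) j
        = C (constantCoeff r)⁻¹ * (C (constantCoeff r) * (xv K (2 + n - 1) i * xv K (2 + n - 1) j)) := by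
      rw [← mul_assoc, ← C_mul, inv_mul_cancel₀ hc, C_1, one_mul]
    rw [this]
    exact Ideal.mul_mem_left _ _ hca
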